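/- Let i, j be integers with (n−2)/2 ≤ i < j ≤ n−1. Then κ(i) > κ(j). -/

import Mathlib

open Finset

/-- `t = s^(e/2)` as a real number. -/
noncomputable def tval (s e : ℕ) : ℝ := (s : ℝ) ^ ((e : ℝ) / 2)

/-- `F(i,k) = ∏_{u=n−2i+k−1}^{n−i−2} (s^u·t + 1)`. -/
noncomputable def F (n s e : ℕ) (i k : ℤ) : ℝ :=
  ∏ u ∈ Finset.Icc ((n:ℤ) - 2*i + k - 1) ((n:ℤ) - i - 2), ((s:ℝ) ^ u * tval s e + 1)

/-- `G(i,k) = s^{(i−k)²} · ∏_{v=1}^{k+1} (s^{i−k+v}−1)/(s^v−1)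
  · ∏_{v=1}^{i−k} (s^{n−2i+k−1+v}−1)/(s^v−1)`. -/
noncomputable def G (n s : ℕ) (i k : ℤ) : ℝ :=
  (s:ℝ) ^ ((i - k)^2) *
  (∏ v ∈ Finset.Icc (1:ℤ) (k + 1), ((s:ℝ) ^ (i - k + v) - 1) / ((s:ℝ) ^ v - 1)) *
  (∏ v ∈ Finset.Icc (1:ℤ) (i - k), ((s:ℝ) ^ ((n:ℤ) - 2*i + k - 1 + v) - 1) / ((s:ℝ) ^ v - 1))

/-- `κ(i) = Σ_{k = max(2i−n+1,−1)}^{i−1} F(i,k)·G(i,k)`, the degree of `(Δ_i, ⊥)`. -/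
noncomputable def kappa (n s e : ℕ) (i : ℤ) : ℝ :=
  ∑ k ∈ Finset.Icc (max (2*i - (n:ℤ) + 1) (-1)) (i - 1), F n s e i k * G n s i k

set_option linter.unusedVariables false
set_option linter.unnecessarySeqFocus false

lemma prod_Icc_top (f : ℤ → ℝ) {a b : ℤ} (h : a ≤ b + 1) :
    ∏ v ∈ Icc a (b+1), f v = (∏ v ∈ Icc a b, f v) * f (b+1) := by
  have hins : Icc a (b+1) = insert (b+1) (Icc a b) := by
    ext x; simp only [mem_Icc, mem_insert]; omega
  rw [hins, Finset.prod_insert (by simp only [mem_Icc]; omega)]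
  ring

noncomputable def Np (q : ℝ) (B C : ℤ) : ℝ := ∏ v ∈ Icc (1:ℤ) C, (q ^ (B + v) - 1)
noncomputable def Dp (q : ℝ) (C : ℤ) : ℝ := ∏ v ∈ Icc (1:ℤ) C, (q ^ v - 1)

lemma Np_pos {q : ℝ} (hq : 1 < q) {B : ℤ} (hB : 0 ≤ B) (C : ℤ) : 0 < Np q B C := by
  refine Finset.prod_pos fun v hv => ?_
  rw [mem_Icc] at hv
  have : (1:ℝ) < q ^ (B + v) := one_lt_zpow₀ hq (by omega)
  linarith

lemma Dp_pos {q : ℝ} (hq : 1 < q) (C : ℤ) : 0 < Dp q C := by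
  refine Finset.prod_pos fun v hv => ?_
  rw [mem_Icc] at hv
  have : (1:ℝ) < q ^ v := one_lt_zpow₀ hq (by omega)
  linarith

lemma Np_succ (q : ℝ) (A B : ℤ) (hB : 1 ≤ B) :
    Np q A B = Np q A (B-1) * (q ^ (A+B) - 1) := by
  have h := prod_Icc_top (fun v => q ^ (A+v) - 1) (a := 1) (b := B-1) (by omega)
  rw [sub_add_cancel] at h
  exact h

lemma Dp_succ (q : ℝ) (B : ℤ) (hB : 1 ≤ B) :
    Dp q B = Dp q (B-1) * (q ^ B - 1) := by
  have h := prod_Icc_top (fun v => q ^ v - 1) (a := 1) (b := B-1) (by omega)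
  rw [sub_add_cancel] at h
  exact h

lemma Dp_two (q : ℝ) (C : ℤ) (hC : 0 ≤ C) :
    Dp q (C+2) = Dp q C * ((q ^ (C+1) - 1) * (q ^ (C+2) - 1)) := by
  have h2 := Dp_succ q (C+2) (by omega)
  have h1 := Dp_succ q (C+1) (by omega)
  rw [show C+2-1 = C+1 by ring] at h2
  rw [show C+1-1 = C by ring] at h1
  rw [h2, h1]; ring

lemma Np_shift (q : ℝ) (B C : ℤ) (hC : 0 ≤ C) :
    Np q (B-1) (C+2) = (q ^ B - 1) * ((q ^ (B+C+1) - 1) * Np q B C) := by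
  unfold Np
  have hmap : Icc (1:ℤ) (C+2) = Finset.map (addLeftEmbedding 1) (Icc 0 (C+1)) := by
    rw [Finset.map_add_left_Icc]
    congr 1 <;> ring
  rw [hmap, Finset.prod_map]
  have : ∀ v : ℤ, q ^ (B - 1 + (addLeftEmbedding (1:ℤ)) v) - 1 = q ^ (B + v) - 1 := by
    intro v
    simp only [addLeftEmbedding_apply]
    ring_nf
  rw [Finset.prod_congr rfl (fun v _ => this v)]
  have hins : Icc (0:ℤ) (C+1) = insert 0 (Icc 1 (C+1)) := by
    ext x; simp only [mem_Icc, mem_insert]; omega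
  rw [hins, Finset.prod_insert (by simp only [mem_Icc]; omega)]
  have htop := prod_Icc_top (fun v => q ^ (B+v) - 1) (a := 1) (b := C) (by omega)
  rw [htop]
  rw [show B + (C+1) = B+C+1 by ring, show B + (0:ℤ) = B by ring]
  ring

lemma scalar (q t : ℝ) (hq : 2 ≤ q) (ht : 1 ≤ t) (A B C : ℤ)
    (hA : 0 ≤ A) (hB : 2 ≤ B) (hC : 0 ≤ C) :
    q ^ ((B-1)^2) * ((q ^ B - 1) * (q ^ B - 1) * (q ^ (B+C+1) - 1)) ≤
    (q ^ (A+B-1) * t + 1) * q ^ (B^2) *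
      ((q ^ (C+1) - 1) * ((q ^ (C+2) - 1) * (q ^ (A+B) - 1))) := by
  have hq0 : (0:ℝ) < q := by linarith
  have hq1 : (1:ℝ) < q := by linarith
  have hqne : q ≠ 0 := ne_of_gt hq0
  have hzp : ∀ m : ℤ, (0:ℝ) < q ^ m := fun m => zpow_pos hq0 m
  have hone : ∀ m : ℤ, 0 ≤ m → (1:ℝ) ≤ q ^ m := fun m hm => one_le_zpow₀ hq1.le hm
  have htwo : ∀ m : ℤ, 1 ≤ m → (2:ℝ) ≤ q ^ m := by
    intro m hm
    calc (2:ℝ) ≤ q := hq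
    _ = q ^ (1:ℤ) := (zpow_one q).symm
    _ ≤ q ^ m := zpow_le_zpow_right₀ hq1.le hm
  have hb1 : (0:ℝ) < q ^ B - 1 := by have := htwo B (by omega); linarith
  have e1 : q ^ ((B-1)^2) * (q ^ B * q ^ (B+C+1)) = q ^ (B^2+C+2) := by
    rw [← zpow_add₀ hqne, ← zpow_add₀ hqne]; congr 1; ring
  have e2 : q ^ (B^2+2*A+B+2*C+2) = q ^ (B^2+C+2) * q ^ (2*A+B+C) := by
    rw [← zpow_add₀ hqne]; congr 1; ring
  have h4 : (4:ℝ) ≤ q ^ (2*A+B+C) := by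
    calc (4:ℝ) = 2*2 := by norm_num
    _ ≤ q * q := by nlinarith
    _ = q ^ (2:ℤ) := by rw [zpow_two]
    _ ≤ q ^ (2*A+B+C) := zpow_le_zpow_right₀ hq1.le (by omega)
  have f1 : q ^ (A+B-1) ≤ q ^ (A+B-1) * t + 1 := by nlinarith [hzp (A+B-1)]
  have f2 : q ^ (C+1)/2 ≤ q ^ (C+1) - 1 := by have := htwo (C+1) (by omega); linarith
  have f3 : q ^ (C+2)/2 ≤ q ^ (C+2) - 1 := by have := htwo (C+2) (by omega); linarith
  have f4 : q ^ A * (q ^ B - 1) ≤ q ^ (A+B) - 1 := by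
    rw [zpow_add₀ hqne]
    have := hone A hA
    nlinarith [hzp A, hzp B]
  have h1 : (q ^ B - 1) * (q ^ (B+C+1) - 1) ≤ q ^ B * q ^ (B+C+1) := by
    nlinarith [hzp B, hzp (B+C+1)]
  calc q ^ ((B-1)^2) * ((q ^ B - 1) * (q ^ B - 1) * (q ^ (B+C+1) - 1))
      = (q ^ ((B-1)^2) * (q ^ B - 1)) * ((q ^ B - 1) * (q ^ (B+C+1) - 1)) := by ring
    _ ≤ (q ^ ((B-1)^2) * (q ^ B - 1)) * (q ^ B * q ^ (B+C+1)) :=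
        mul_le_mul_of_nonneg_left h1 (mul_pos (hzp _) hb1).le
    _ = (q ^ B - 1) * (q ^ ((B-1)^2) * (q ^ B * q ^ (B+C+1))) := by ring
    _ = (q ^ B - 1) * q ^ (B^2+C+2) := by rw [e1]
    _ ≤ (q ^ B - 1) * ((1/4) * q ^ (B^2+2*A+B+2*C+2)) := by
        rw [e2]
        have h5 : q ^ (B^2+C+2) ≤ (1/4) * (q ^ (B^2+C+2) * q ^ (2*A+B+C)) := by
          nlinarith [hzp (B^2+C+2)]
        exact mul_le_mul_of_nonneg_left h5 hb1.le
    _ = q ^ (A+B-1) * q ^ (B^2) * ((q ^ (C+1)/2) * ((q ^ (C+2)/2) * (q ^ A * (q ^ B - 1)))) := by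
        rw [show B^2+2*A+B+2*C+2 = (A+B-1) + (B^2) + ((C+1) + ((C+2) + A)) by ring]
        simp only [zpow_add₀ hqne]
        ring
    _ ≤ (q ^ (A+B-1) * t + 1) * q ^ (B^2) *
          ((q ^ (C+1) - 1) * ((q ^ (C+2) - 1) * (q ^ (A+B) - 1))) := by
        have p3 : (0:ℝ) < q ^ A * (q ^ B - 1) := mul_pos (hzp A) hb1
        have n2 : (0:ℝ) ≤ q ^ (C+2) - 1 := by have := htwo (C+2) (by omega); linarith
        have n1 : (0:ℝ) ≤ q ^ (C+1) - 1 := by have := htwo (C+1) (by omega); linarith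
        have nab : (0:ℝ) ≤ q ^ (A+B) - 1 := le_trans p3.le f4
        have i2 : (q ^ (C+2)/2) * (q ^ A * (q ^ B - 1)) ≤ (q ^ (C+2) - 1) * (q ^ (A+B) - 1) :=
          mul_le_mul f3 f4 p3.le n2
        have i1 : (q ^ (C+1)/2) * ((q ^ (C+2)/2) * (q ^ A * (q ^ B - 1))) ≤
            (q ^ (C+1) - 1) * ((q ^ (C+2) - 1) * (q ^ (A+B) - 1)) :=
          mul_le_mul f2 i2 (by positivity) n1
        have i0 : q ^ (A+B-1) * q ^ (B^2) ≤ (q ^ (A+B-1) * t + 1) * q ^ (B^2) :=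
          mul_le_mul_of_nonneg_right f1 (hzp _).le
        exact mul_le_mul i0 i1 (by positivity) (by positivity)

lemma key (q t : ℝ) (hq : 2 ≤ q) (ht : 1 ≤ t) (A B C : ℤ)
    (hA : 0 ≤ A) (hB : 2 ≤ B) (hC : 0 ≤ C) :
    q ^ ((B-1)^2) * (Np q (B-1) (C+2) / Dp q (C+2)) * (Np q A (B-1) / Dp q (B-1)) ≤
    (q ^ (A+B-1) * t + 1) * (q ^ (B^2) * (Np q B C / Dp q C) * (Np q A B / Dp q B)) := by
  have hq1 : (1:ℝ) < q := by linarith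
  have htwo : ∀ m : ℤ, 1 ≤ m → (2:ℝ) ≤ q ^ m := by
    intro m hm
    calc (2:ℝ) ≤ q := hq
    _ = q ^ (1:ℤ) := (zpow_one q).symm
    _ ≤ q ^ m := zpow_le_zpow_right₀ hq1.le hm
  have hb1 : (0:ℝ) < q ^ B - 1 := by have := htwo B (by omega); linarith
  have hc1 : (0:ℝ) < q ^ (C+1) - 1 := by have := htwo (C+1) (by omega); linarith
  have hc2 : (0:ℝ) < q ^ (C+2) - 1 := by have := htwo (C+2) (by omega); linarith
  have hX : 0 < Np q B C := Np_pos hq1 (by omega) C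
  have hY : 0 < Np q A (B-1) := Np_pos hq1 hA (B-1)
  have hDC : 0 < Dp q C := Dp_pos hq1 C
  have hDB : 0 < Dp q (B-1) := Dp_pos hq1 (B-1)
  rw [Np_shift q B C hC, Dp_two q C hC, Np_succ q A B (by omega), Dp_succ q B (by omega)]
  set Z : ℝ := Np q B C * Np q A (B-1) /
      (Dp q C * Dp q (B-1) * ((q ^ (C+1) - 1) * ((q ^ (C+2) - 1) * (q ^ B - 1)))) with hZ
  have hZpos : 0 ≤ Z := by positivity
  have lhs_eq :
      q ^ ((B-1)^2) * ((q ^ B - 1) * ((q ^ (B+C+1) - 1) * Np q B C) /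
          (Dp q C * ((q ^ (C+1) - 1) * (q ^ (C+2) - 1)))) * (Np q A (B-1) / Dp q (B-1)) =
      (q ^ ((B-1)^2) * ((q ^ B - 1) * (q ^ B - 1) * (q ^ (B+C+1) - 1))) * Z := by
    rw [hZ]; field_simp
  have rhs_eq :
      (q ^ (A+B-1) * t + 1) * (q ^ (B^2) * (Np q B C / Dp q C) *
          (Np q A (B-1) * (q ^ (A+B) - 1) / (Dp q (B-1) * (q ^ B - 1)))) =
      ((q ^ (A+B-1) * t + 1) * q ^ (B^2) *
        ((q ^ (C+1) - 1) * ((q ^ (C+2) - 1) * (q ^ (A+B) - 1)))) * Z := by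
    rw [hZ]; field_simp
  rw [lhs_eq, rhs_eq]
  exact mul_le_mul_of_nonneg_right (scalar q t hq ht A B C hA hB hC) hZpos

lemma G_eq (n s : ℕ) (i k : ℤ) :
    G n s i k = (s:ℝ) ^ ((i-k)^2) * (Np (s:ℝ) (i-k) (k+1) / Dp (s:ℝ) (k+1)) *
      (Np (s:ℝ) ((n:ℤ)-2*i+k-1) (i-k) / Dp (s:ℝ) (i-k)) := by
  unfold G Np Dp
  rw [Finset.prod_div_distrib, Finset.prod_div_distrib]

lemma tval_one_le (s e : ℕ) (hs : 2 ≤ s) : 1 ≤ tval s e := by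
  unfold tval
  apply Real.one_le_rpow (by exact_mod_cast hs.trans' (by norm_num)) (by positivity)

lemma tval_pos (s e : ℕ) (hs : 2 ≤ s) : 0 < tval s e := lt_of_lt_of_le one_pos (tval_one_le s e hs)

lemma F_pos (n s e : ℕ) (hs : 2 ≤ s) (i k : ℤ) : 0 < F n s e i k := by
  unfold F
  refine Finset.prod_pos fun u _ => ?_
  have hs0 : (0:ℝ) < (s:ℝ) := by exact_mod_cast Nat.lt_of_lt_of_le (by norm_num) hs
  have := tval_pos s e hs
  positivity

lemma G_pos (n s : ℕ) (hs : 2 ≤ s) (i k : ℤ) (h1 : 0 ≤ i - k) (h2 : 0 ≤ (n:ℤ)-2*i+k-1) :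
    0 < G n s i k := by
  have hq1 : (1:ℝ) < (s:ℝ) := by exact_mod_cast Nat.lt_of_lt_of_le (by norm_num) hs
  rw [G_eq]
  have := Np_pos hq1 h1 (k+1)
  have := Np_pos hq1 h2 (i-k)
  have := Dp_pos hq1 (k+1)
  have := Dp_pos hq1 (i-k)
  have hq0 : (0:ℝ) < (s:ℝ) := by linarith
  positivity

lemma F_split (n s e : ℕ) (i k : ℤ) (hk : k ≤ i - 1) (hkn : 2*i - (n:ℤ) + 1 ≤ k) :
    F n s e i k = F n s e (i+1) (k+2) * ((s:ℝ) ^ ((n:ℤ) - i - 2) * tval s e + 1) := by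
  unfold F
  have e2 : (n:ℤ) - 2*(i+1) + (k+2) - 1 = n - 2*i + k - 1 := by ring
  have e3 : (n:ℤ) - (i+1) - 2 = n - i - 3 := by ring
  rw [e2, e3, show (n:ℤ) - i - 2 = (n - i - 3) + 1 by ring,
    prod_Icc_top (fun u => (s:ℝ) ^ u * tval s e + 1) (by omega)]

lemma Tstep (n s e : ℕ) (hs : 2 ≤ s) (i k : ℤ)
    (hk1 : 2*i - (n:ℤ) + 1 ≤ k) (hk2 : k ≤ i - 2) (hk3 : -1 ≤ k) :
    F n s e (i+1) (k+2) * G n s (i+1) (k+2) ≤ F n s e i k * G n s i k := by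
  have hq : (2:ℝ) ≤ (s:ℝ) := by exact_mod_cast hs
  have hq1 : (1:ℝ) < (s:ℝ) := by linarith
  set q : ℝ := (s:ℝ)
  set A : ℤ := (n:ℤ) - 2*i + k - 1 with hA_def
  set B : ℤ := i - k with hB_def
  set C : ℤ := k + 1 with hC_def
  have hA : 0 ≤ A := by omega
  have hB : 2 ≤ B := by omega
  have hC : 0 ≤ C := by omega
  have hGi : G n s i k = q ^ (B^2) * (Np q B C / Dp q C) * (Np q A B / Dp q B) := G_eq n s i k
  have hGi1 : G n s (i+1) (k+2) =
      q ^ ((B-1)^2) * (Np q (B-1) (C+2) / Dp q (C+2)) * (Np q A (B-1) / Dp q (B-1)) := by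
    have := G_eq n s (i+1) (k+2)
    rw [this, show i + 1 - (k+2) = B - 1 by omega, show (k+2) + 1 = C + 2 by omega,
      show (n:ℤ) - 2*(i+1) + (k+2) - 1 = A by omega]
  have hkey := key q (tval s e) hq (tval_one_le s e hs) A B C hA hB hC
  rw [F_split n s e i k (by omega) hk1, hGi, hGi1]
  have hF1 : 0 < F n s e (i+1) (k+2) := F_pos n s e hs (i+1) (k+2)
  have heq : (n:ℤ) - i - 2 = A + B - 1 := by omega
  calc F n s e (i+1) (k+2) *
        (q ^ ((B-1)^2) * (Np q (B-1) (C+2) / Dp q (C+2)) * (Np q A (B-1) / Dp q (B-1)))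
      ≤ F n s e (i+1) (k+2) *
        ((q ^ (A+B-1) * tval s e + 1) * (q ^ (B^2) * (Np q B C / Dp q C) * (Np q A B / Dp q B))) :=
        mul_le_mul_of_nonneg_left hkey hF1.le
    _ = F n s e (i+1) (k+2) * (q ^ ((n:ℤ) - i - 2) * tval s e + 1) *
        (q ^ (B^2) * (Np q B C / Dp q C) * (Np q A B / Dp q B)) := by rw [heq]; ring

lemma descent (n s e : ℕ) (hs : 2 ≤ s) (i : ℤ)
    (h1 : (n:ℤ) - 2 ≤ 2*i) (h2 : i ≤ (n:ℤ) - 2) :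
    kappa n s e (i+1) < kappa n s e i := by
  unfold kappa
  have hm1 : max (2*i - (n:ℤ) + 1) (-1) = 2*i - n + 1 := max_eq_left (by omega)
  have hm2 : max (2*(i+1) - (n:ℤ) + 1) (-1) = 2*i - n + 3 := by
    rw [max_eq_left (by omega)]; ring
  rw [hm1, hm2, show i + 1 - 1 = i by ring]
  have hmap : Icc (2*i - (n:ℤ) + 3) i =
      Finset.map (addLeftEmbedding 2) (Icc (2*i - (n:ℤ) + 1) (i - 2)) := by
    rw [Finset.map_add_left_Icc]; congr 1 <;> ring
  rw [hmap, Finset.sum_map]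
  have hsplit : Icc (2*i - (n:ℤ) + 1) (i-1) = insert (i-1) (Icc (2*i - (n:ℤ) + 1) (i-2)) := by
    ext x; simp only [mem_Icc, mem_insert]; omega
  rw [hsplit, Finset.sum_insert (by simp only [mem_Icc]; omega)]
  have hterm : ∀ k ∈ Icc (2*i - (n:ℤ) + 1) (i-2),
      F n s e (i+1) ((addLeftEmbedding 2) k) * G n s (i+1) ((addLeftEmbedding 2) k) ≤
      F n s e i k * G n s i k := by
    intro k hk
    rw [mem_Icc] at hk
    have : (addLeftEmbedding (2:ℤ)) k = k + 2 := by
      simp [addLeftEmbedding_apply]; ring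
    rw [this]
    exact Tstep n s e hs i k hk.1 hk.2 (by omega)
  have hsum := Finset.sum_le_sum hterm
  have hpos : 0 < F n s e i (i-1) * G n s i (i-1) :=
    mul_pos (F_pos n s e hs i (i-1)) (G_pos n s hs i (i-1) (by omega) (by omega))
  linarith

theorem stmt_11 (n s e : ℕ) (hn : 3 ≤ n) (hs : 2 ≤ s) (he : e ≤ 4)
    (i j : ℤ) (hi : ((n:ℝ) - 2) / 2 ≤ (i:ℝ)) (hij : i < j) (hj : j ≤ (n:ℤ) - 1) :
    kappa n s e i > kappa n s e j := by
  have h2i : (n:ℤ) - 2 ≤ 2*i := by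
    have h : (n:ℝ) - 2 ≤ 2*(i:ℝ) := by linarith
    exact_mod_cast h
  have main : ∀ m : ℤ, i + 1 ≤ m → (m ≤ (n:ℤ) - 1 → kappa n s e m < kappa n s e i) := by
    refine fun m hm => Int.le_induction (motive := fun m _ => m ≤ (n:ℤ) - 1 → kappa n s e m < kappa n s e i) ?_ ?_ m hm
    · intro hle
      exact descent n s e hs i h2i (by omega)
    · intro m' hm' ih hle
      have step : kappa n s e (m'+1) < kappa n s e m' :=
        descent n s e hs m' (by omega) (by omega)
      exact step.trans (ih (by omega))
  exact main j (by omega) hj
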